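/- arXiv:2203.13527 — 2 statements merged into one kernel-verified Lean document; each statement's English description precedes it below -/
import Mathlib

section
/- Let A, P, S be real n×n matrices with Sᵀ P = Pᵀ S and rank [P; S] = n, let B be a real n×m matrix, C a real m×n matrix, and D a real m×m matrix, and suppose the symmetric matrix [[Sᵀ A P + Pᵀ Aᵀ S, Sᵀ B − Pᵀ Cᵀ], [Bᵀ S − C P, −D − Dᵀ]] is negative semidefinite. Then for every i ≥ 0 the column space of Aⁱ B is contained in the column space of P; consequently, if rank P < n, then the pair (A, B) is uncontrollable, i.e., the controllability matrix [B, A B, A² B, …, A^{n−1} B] has rank strictly less than n. -/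
open Matrix

/-- A real symmetric matrix `T` is negative semidefinite if `vᵀ T v ≤ 0` for all
vectors `v`. -/
def NegSemidefR {ι : Type*} [Fintype ι] (T : Matrix ι ι ℝ) : Prop :=
  T.IsSymm ∧ ∀ v : ι → ℝ, v ⬝ᵥ (T *ᵥ v) ≤ 0

/-- The controllability matrix `[B, A B, A² B, …, A^{n−1} B]` of the pair `(A, B)`,
with columns indexed by `Fin n × Fin m`. -/
def ctrbMatrix {n m : ℕ} (A : Matrix (Fin n) (Fin n) ℝ)
    (B : Matrix (Fin n) (Fin m) ℝ) : Matrix (Fin n) (Fin n × Fin m) ℝ :=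
  Matrix.of fun i jq => (A ^ (jq.1 : ℕ) * B) i jq.2

private lemma quad_aux {c d : ℝ} (h : ∀ t : ℝ, 2 * t * c + t ^ 2 * d ≤ 0) : c = 0 := by
  have hd : d ≤ 0 := by
    by_contra hd
    push_neg at hd
    have h1 := h ((2 * |c| + 1) / d)
    have hd' : d ≠ 0 := ne_of_gt hd
    have e : 2 * ((2 * |c| + 1) / d) * c + ((2 * |c| + 1) / d) ^ 2 * d
        = (2 * (2 * |c| + 1) * c + (2 * |c| + 1) ^ 2) / d := by
      field_simp
    rw [e] at h1
    have h2 : 2 * (2 * |c| + 1) * c + (2 * |c| + 1) ^ 2 ≤ 0 := by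
      by_contra h3
      push_neg at h3
      have := div_pos h3 hd
      linarith
    nlinarith [abs_nonneg c, neg_abs_le c, le_abs_self c]
  have h1d : (0:ℝ) < 1 - d := by linarith
  have key := h (c / (1 - d))
  have e : 2 * (c / (1 - d)) * c + (c / (1 - d)) ^ 2 * d = c ^ 2 * (2 - d) / (1 - d) ^ 2 := by
    field_simp; ring
  rw [e] at key
  have h2 : c ^ 2 * (2 - d) ≤ 0 := by
    by_contra h3
    push_neg at h3
    have hsq : (0:ℝ) < (1 - d) ^ 2 := by positivity
    have := div_pos h3 hsq
    linarith
  nlinarith [sq_nonneg c]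

private lemma nsd_mulVec_eq_zero {ι : Type*} [Fintype ι] {M : Matrix ι ι ℝ}
    (hM : NegSemidefR M) {x : ι → ℝ} (hx : x ⬝ᵥ (M *ᵥ x) = 0) : M *ᵥ x = 0 := by
  obtain ⟨hsymm, hneg⟩ := hM
  have hswap : ∀ a b : ι → ℝ, a ⬝ᵥ (M *ᵥ b) = b ⬝ᵥ (M *ᵥ a) := by
    intro a b
    rw [Matrix.dotProduct_mulVec]
    conv_lhs => rw [show a ᵥ* M = a ᵥ* Mᵀᵀ by rw [Matrix.transpose_transpose]]
    rw [Matrix.vecMul_transpose, hsymm, dotProduct_comm]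
  have hall : ∀ y : ι → ℝ, y ⬝ᵥ (M *ᵥ x) = 0 := by
    intro y
    apply quad_aux (d := y ⬝ᵥ (M *ᵥ y))
    intro t
    have hq := hneg (x + t • y)
    have expand : (x + t • y) ⬝ᵥ (M *ᵥ (x + t • y))
        = x ⬝ᵥ (M *ᵥ x) + 2 * t * (y ⬝ᵥ (M *ᵥ x)) + t ^ 2 * (y ⬝ᵥ (M *ᵥ y)) := by
      rw [Matrix.mulVec_add, Matrix.mulVec_smul]
      rw [add_dotProduct, dotProduct_add, dotProduct_add,
        smul_dotProduct, dotProduct_smul, dotProduct_smul,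
        smul_dotProduct, hswap x y]
      simp only [smul_eq_mul]
      ring
    rw [expand, hx] at hq
    linarith
  exact dotProduct_self_eq_zero.mp (hall (M *ᵥ x))

private lemma mem_range_of_dot {n : ℕ} (P : Matrix (Fin n) (Fin n) ℝ) (v : Fin n → ℝ)
    (hv : ∀ w : Fin n → ℝ, Pᵀ *ᵥ w = 0 → w ⬝ᵥ v = 0) :
    v ∈ LinearMap.range P.mulVecLin := by
  let R : Submodule ℝ (EuclideanSpace ℝ (Fin n)) :=
    (LinearMap.range P.mulVecLin).comap (WithLp.linearEquiv 2 ℝ (Fin n → ℝ)).toLinearMap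
  obtain ⟨y, hy, z, hz, hvyz⟩ := R.exists_add_mem_mem_orthogonal (WithLp.toLp 2 v)
  have hinner : ∀ a b : EuclideanSpace ℝ (Fin n),
      (inner ℝ a b : ℝ) = a.ofLp ⬝ᵥ b.ofLp := by
    intro a b
    simp [PiLp.inner_apply, dotProduct, mul_comm]
  have hPz : Pᵀ *ᵥ z.ofLp = 0 := by
    funext j
    have hmem : WithLp.toLp 2 (P.mulVecLin (Pi.single j 1)) ∈ R :=
      ⟨Pi.single j 1, rfl⟩
    have h0 := hz _ hmem
    rw [hinner] at h0
    simp only [Matrix.mulVecLin_apply, WithLp.ofLp_toLp] at h0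
    rw [dotProduct_comm, dotProduct_mulVec,
      show z.ofLp ᵥ* P = Pᵀ *ᵥ z.ofLp from
        (Matrix.mulVec_transpose P _).symm] at h0
    simpa using h0
  have hzv : z.ofLp ⬝ᵥ v = 0 := hv _ hPz
  have hzy : y.ofLp ⬝ᵥ z.ofLp = 0 := by
    have h0 := hz y hy
    rwa [hinner] at h0
  have hveq : v = y.ofLp + z.ofLp := by
    have := congrArg WithLp.ofLp hvyz
    simpa using this
  have hzz : z.ofLp ⬝ᵥ z.ofLp = 0 := by
    rw [hveq, dotProduct_add, dotProduct_comm _ y.ofLp, hzy] at hzv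
    linarith
  have hz0 : z.ofLp = 0 := dotProduct_self_eq_zero.mp hzz
  have hvy : v = y.ofLp := by rw [hveq, hz0, add_zero]
  rw [hvy]
  exact hy

theorem stmt_9 {n m : ℕ} (A P S : Matrix (Fin n) (Fin n) ℝ)
    (B : Matrix (Fin n) (Fin m) ℝ) (C : Matrix (Fin m) (Fin n) ℝ)
    (D : Matrix (Fin m) (Fin m) ℝ)
    (hsym : Sᵀ * P = Pᵀ * S) (hrank : (Matrix.fromRows P S).rank = n)
    (h : NegSemidefR (Matrix.fromBlocks
      (Sᵀ * A * P + Pᵀ * Aᵀ * S) (Sᵀ * B - Pᵀ * Cᵀ)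
      (Bᵀ * S - C * P) (-D - Dᵀ))) :
    (∀ i : ℕ, LinearMap.range (Matrix.mulVecLin (A ^ i * B)) ≤
        LinearMap.range (Matrix.mulVecLin P)) ∧
      (P.rank < n → (ctrbMatrix A B).rank < n) := by
  -- trivial joint kernel from the rank condition
  have hker : ∀ x : Fin n → ℝ, P *ᵥ x = 0 → S *ᵥ x = 0 → x = 0 := by
    intro x hP hS
    have hrn : Module.finrank ℝ (LinearMap.range (Matrix.fromRows P S).mulVecLin) = n := hrank
    have hrk := LinearMap.finrank_range_add_finrank_ker (Matrix.fromRows P S).mulVecLin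
    rw [hrn, Module.finrank_fin_fun] at hrk
    have hk0 : Module.finrank ℝ (LinearMap.ker (Matrix.fromRows P S).mulVecLin) = 0 := by omega
    have hkbot := Submodule.finrank_eq_zero.mp hk0
    have hx : x ∈ LinearMap.ker (Matrix.fromRows P S).mulVecLin := by
      rw [LinearMap.mem_ker, Matrix.mulVecLin_apply, Matrix.fromRows_mulVec, hP, hS]
      funext i
      cases i <;> rfl
    rw [hkbot] at hx
    simpa using hx
  -- key consequences of the dissipation inequality
  have main : ∀ x : Fin n → ℝ, P *ᵥ x = 0 →
      Bᵀ *ᵥ (S *ᵥ x) = 0 ∧ Pᵀ *ᵥ (Aᵀ *ᵥ (S *ᵥ x)) = 0 := by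
    intro x hPx
    have e1 : (Sᵀ * A * P) *ᵥ x = 0 := by
      rw [← Matrix.mulVec_mulVec, ← Matrix.mulVec_mulVec, hPx]
      simp
    have hq0 : (Sum.elim x (0 : Fin m → ℝ)) ⬝ᵥ
        ((Matrix.fromBlocks (Sᵀ * A * P + Pᵀ * Aᵀ * S) (Sᵀ * B - Pᵀ * Cᵀ)
          (Bᵀ * S - C * P) (-D - Dᵀ)) *ᵥ Sum.elim x (0 : Fin m → ℝ)) = 0 := by
      rw [Matrix.fromBlocks_mulVec, sumElim_dotProduct_sumElim]
      simp only [Sum.elim_comp_inl, Sum.elim_comp_inr]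
      have e2 : x ⬝ᵥ ((Pᵀ * Aᵀ * S) *ᵥ x) = 0 := by
        rw [Matrix.mul_assoc, ← Matrix.mulVec_mulVec, Matrix.dotProduct_mulVec,
          ← Matrix.mulVec_transpose, Matrix.transpose_transpose, hPx]
        simp
      have e3 : (Sᵀ * A * P + Pᵀ * Aᵀ * S) *ᵥ x = (Pᵀ * Aᵀ * S) *ᵥ x := by
        rw [Matrix.add_mulVec, e1, zero_add]
      rw [Matrix.mulVec_zero, Matrix.mulVec_zero, add_zero, add_zero, e3, e2,
        zero_dotProduct, add_zero]
    have hz := nsd_mulVec_eq_zero h hq0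
    rw [Matrix.fromBlocks_mulVec] at hz
    simp only [Sum.elim_comp_inl, Sum.elim_comp_inr] at hz
    have hz1 : (Sᵀ * A * P + Pᵀ * Aᵀ * S) *ᵥ x = 0 := by
      funext i
      simpa [Matrix.mulVec_zero] using congrFun hz (Sum.inl i)
    have hz2 : (Bᵀ * S - C * P) *ᵥ x = 0 := by
      funext i
      simpa [Matrix.mulVec_zero] using congrFun hz (Sum.inr i)
    constructor
    · have h4 : (Bᵀ * S) *ᵥ x - (C * P) *ᵥ x = 0 := by
        rw [← Matrix.sub_mulVec]; exact hz2
      rw [← Matrix.mulVec_mulVec, ← Matrix.mulVec_mulVec, hPx, Matrix.mulVec_zero,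
        sub_zero] at h4
      exact h4
    · have h4 : (Sᵀ * A * P) *ᵥ x + (Pᵀ * Aᵀ * S) *ᵥ x = 0 := by
        rw [← Matrix.add_mulVec]; exact hz1
      rw [e1, zero_add, ← Matrix.mulVec_mulVec, ← Matrix.mulVec_mulVec] at h4
      exact h4
  -- every vector in ker Pᵀ is of the form S x with P x = 0
  have surj : ∀ w : Fin n → ℝ, Pᵀ *ᵥ w = 0 → ∃ x, P *ᵥ x = 0 ∧ S *ᵥ x = w := by
    have hmapsto : ∀ x : Fin n → ℝ, x ∈ LinearMap.ker P.mulVecLin →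
        S.mulVecLin x ∈ LinearMap.ker Pᵀ.mulVecLin := by
      intro x hx
      rw [LinearMap.mem_ker, Matrix.mulVecLin_apply] at hx
      rw [LinearMap.mem_ker, Matrix.mulVecLin_apply, Matrix.mulVecLin_apply,
        Matrix.mulVec_mulVec, ← hsym, ← Matrix.mulVec_mulVec, hx, Matrix.mulVec_zero]
    let f : LinearMap.ker P.mulVecLin →ₗ[ℝ] LinearMap.ker Pᵀ.mulVecLin :=
      LinearMap.codRestrict _ (S.mulVecLin.comp (LinearMap.ker P.mulVecLin).subtype)
        (fun x => hmapsto x x.2)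
    have hinj : Function.Injective f := by
      intro a b hab
      have hab' : S *ᵥ (a : Fin n → ℝ) = S *ᵥ (b : Fin n → ℝ) := by
        have := congrArg Subtype.val hab
        exact this
    -- show a = b
      apply Subtype.ext
      have hdiff : ((a : Fin n → ℝ) - (b : Fin n → ℝ)) = 0 := by
        apply hker
        · rw [Matrix.mulVec_sub]
          have ha := a.2; have hb := b.2
          rw [LinearMap.mem_ker, Matrix.mulVecLin_apply] at ha hb
          rw [ha, hb, sub_self]
        · rw [Matrix.mulVec_sub, hab', sub_self]
      exact sub_eq_zero.mp hdiff
    have hdim : Module.finrank ℝ (LinearMap.ker P.mulVecLin)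
        = Module.finrank ℝ (LinearMap.ker Pᵀ.mulVecLin) := by
      have h1 := LinearMap.finrank_range_add_finrank_ker P.mulVecLin
      have h2 := LinearMap.finrank_range_add_finrank_ker Pᵀ.mulVecLin
      rw [Module.finrank_fin_fun] at h1 h2
      have hr1 : Module.finrank ℝ (LinearMap.range P.mulVecLin) = P.rank := rfl
      have hr2 : Module.finrank ℝ (LinearMap.range Pᵀ.mulVecLin) = Pᵀ.rank := rfl
      rw [hr1] at h1
      rw [hr2, Matrix.rank_transpose] at h2
      omega
    have hsurjf := (LinearMap.injective_iff_surjective_of_finrank_eq_finrank hdim).mp hinj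
    intro w hw
    have hwL : w ∈ LinearMap.ker Pᵀ.mulVecLin := by
      rw [LinearMap.mem_ker, Matrix.mulVecLin_apply]; exact hw
    obtain ⟨x, hx⟩ := hsurjf ⟨w, hwL⟩
    refine ⟨(x : Fin n → ℝ), ?_, ?_⟩
    · have := x.2
      rwa [LinearMap.mem_ker, Matrix.mulVecLin_apply] at this
    · have := congrArg Subtype.val hx
      exact this
  -- orthogonality of A^i B to ker Pᵀ
  have key : ∀ i : ℕ, ∀ w : Fin n → ℝ, Pᵀ *ᵥ w = 0 → (A ^ i * B)ᵀ *ᵥ w = 0 := by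
    intro i
    induction i with
    | zero =>
      intro w hw
      obtain ⟨x, hPx, hSx⟩ := surj w hw
      rw [pow_zero, Matrix.one_mul, ← hSx]
      exact (main x hPx).1
    | succ i ih =>
      intro w hw
      obtain ⟨x, hPx, hSx⟩ := surj w hw
      have hstep : Pᵀ *ᵥ (Aᵀ *ᵥ w) = 0 := by
        rw [← hSx]
        exact (main x hPx).2
      have e : (A ^ (i + 1) * B)ᵀ *ᵥ w = (A ^ i * B)ᵀ *ᵥ (Aᵀ *ᵥ w) := by
        rw [pow_succ', Matrix.mul_assoc, Matrix.transpose_mul, ← Matrix.mulVec_mulVec]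
      rw [e]
      exact ih _ hstep
  have part1 : ∀ i : ℕ, LinearMap.range (Matrix.mulVecLin (A ^ i * B)) ≤
      LinearMap.range (Matrix.mulVecLin P) := by
    intro i v hv
    obtain ⟨u, rfl⟩ := hv
    apply mem_range_of_dot
    intro w hw
    rw [Matrix.mulVecLin_apply, Matrix.dotProduct_mulVec,
      show w ᵥ* (A ^ i * B) = (A ^ i * B)ᵀ *ᵥ w from (Matrix.mulVec_transpose _ w).symm,
      key i w hw, zero_dotProduct]
  refine ⟨part1, fun hPr => ?_⟩
  have hsub : LinearMap.range (ctrbMatrix A B).mulVecLin ≤ LinearMap.range P.mulVecLin := by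
    rintro v ⟨u, rfl⟩
    have hdecomp : (ctrbMatrix A B).mulVecLin u
        = ∑ j : Fin n, (A ^ (j : ℕ) * B) *ᵥ (fun q => u (j, q)) := by
      funext i
      simp [ctrbMatrix, Matrix.mulVecLin_apply, Matrix.mulVec, dotProduct,
        Fintype.sum_prod_type, Finset.sum_apply]
    rw [hdecomp]
    apply Submodule.sum_mem
    intro j _
    exact part1 (j : ℕ) ⟨(fun q => u (j, q)), rfl⟩
  have hle : (ctrbMatrix A B).rank ≤ P.rank := Submodule.finrank_mono hsub
  omega
end

section
/- Let n = k + l and let all matrices be real, partitioned as follows: A = [[A₁₁, A₁₂], [0, A₂₂]] (n×n), B = [B₁; 0] (n×m), C = [C₁, C₂] (m×n), P = [[I_k, 0], [0, 0]] (n×n), S = [[S₁₁, 0], [0, S₂₂]] (n×n) with S₁₁ = S₁₁ᵀ, and M = [M₁, 0] (r×n with M₁ of size r×k). Suppose Sᵀ A P + Pᵀ Aᵀ S = −Mᵀ M and C P = Bᵀ S. Then for every s ∈ ℂ such that sI − A₁₁ and sI + A₁₁ᵀ are invertible (real matrices coerced entrywise into ℂ), the generalized transfer matrix G(s) = C₁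 (sI − A₁₁)⁻¹ B₁ of the DAE system P ż = A P z + B u, y = C P z satisfies G(s) + G(−s)ᵀ = K(−s)ᵀ K(s), where K(s) = M₁ (sI − A₁₁)⁻¹ B₁; explicitly, C₁(sI−A₁₁)⁻¹B₁ + B₁ᵀ(−sI−A₁₁ᵀ)⁻¹C₁ᵀ = B₁ᵀ(−sI−A₁₁ᵀ)⁻¹M₁ᵀ M₁ (sI−A₁₁)⁻¹B₁. -/
open Matrix

/-- Entrywise coercion of a real matrix into a complex matrix. -/
def cm {a b : ℕ} (M : Matrix (Fin a) (Fin b) ℝ) : Matrix (Fin a) (Fin b) ℂ :=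
  M.map Complex.ofReal

lemma cm_mul {a b c : ℕ} (M : Matrix (Fin a) (Fin b) ℝ) (N : Matrix (Fin b) (Fin c) ℝ) :
    cm (M * N) = cm M * cm N := by
  ext i j
  simp [cm, Matrix.mul_apply]

lemma cm_transpose {a b : ℕ} (M : Matrix (Fin a) (Fin b) ℝ) : cm Mᵀ = (cm M)ᵀ := by
  simp [cm, Matrix.transpose_map]

lemma cm_add {a b : ℕ} (M N : Matrix (Fin a) (Fin b) ℝ) : cm (M + N) = cm M + cm N := by
  ext i j; simp [cm]

lemma cm_neg {a b : ℕ} (M : Matrix (Fin a) (Fin b) ℝ) : cm (-M) = -cm M := by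
  ext i j; simp [cm]

theorem stmt_12 {k l m r : ℕ}
    (A11 : Matrix (Fin k) (Fin k) ℝ) (A12 : Matrix (Fin k) (Fin l) ℝ)
    (A22 : Matrix (Fin l) (Fin l) ℝ)
    (B1 : Matrix (Fin k) (Fin m) ℝ)
    (C1 : Matrix (Fin m) (Fin k) ℝ) (C2 : Matrix (Fin m) (Fin l) ℝ)
    (S11 : Matrix (Fin k) (Fin k) ℝ) (S22 : Matrix (Fin l) (Fin l) ℝ)
    (M1 : Matrix (Fin r) (Fin k) ℝ)
    (hS11 : S11ᵀ = S11)
    -- the factored generalized Lyapunov equation  Sᵀ A P + Pᵀ Aᵀ S = − Mᵀ M :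
    (h1 : (Matrix.fromBlocks S11 0 0 S22)ᵀ *
          (Matrix.fromBlocks A11 A12 0 A22) * (Matrix.fromBlocks 1 0 0 0) +
        (Matrix.fromBlocks 1 0 0 0)ᵀ * (Matrix.fromBlocks A11 A12 0 A22)ᵀ *
          (Matrix.fromBlocks S11 0 0 S22) =
        -((Matrix.fromCols M1 0)ᵀ * (Matrix.fromCols M1 0)))
    -- the output matching condition  C P = Bᵀ S :
    (h2 : (Matrix.fromCols C1 C2) * (Matrix.fromBlocks 1 0 0 0) =
        (Matrix.fromRows B1 (0 : Matrix (Fin l) (Fin m) ℝ))ᵀ *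
          (Matrix.fromBlocks S11 0 0 S22)) :
    ∀ s : ℂ,
      IsUnit (s • (1 : Matrix (Fin k) (Fin k) ℂ) - cm A11) →
      IsUnit (s • (1 : Matrix (Fin k) (Fin k) ℂ) + (cm A11)ᵀ) →
      cm C1 * (s • (1 : Matrix (Fin k) (Fin k) ℂ) - cm A11)⁻¹ * cm B1 +
        (cm B1)ᵀ * (-(s • (1 : Matrix (Fin k) (Fin k) ℂ)) - (cm A11)ᵀ)⁻¹ * (cm C1)ᵀ =
      ((cm B1)ᵀ * (-(s • (1 : Matrix (Fin k) (Fin k) ℂ)) - (cm A11)ᵀ)⁻¹ * (cm M1)ᵀ) *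
        (cm M1 * (s • (1 : Matrix (Fin k) (Fin k) ℂ) - cm A11)⁻¹ * cm B1) := by
  -- extract the block equations
  rw [Matrix.transpose_fromCols, Matrix.fromRows_mul_fromCols] at h1
  simp only [Matrix.fromBlocks_transpose, Matrix.fromBlocks_multiply, hS11,
    Matrix.mul_zero, Matrix.zero_mul, Matrix.mul_one, Matrix.one_mul,
    Matrix.transpose_zero, Matrix.transpose_one, add_zero, zero_add,
    Matrix.fromBlocks_neg, Matrix.fromBlocks_add] at h1
  have hL : S11 * A11 + A11ᵀ * S11 = -(M1ᵀ * M1) := (Matrix.fromBlocks_inj.mp h1).1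
  erw [Matrix.fromCols_mul_fromBlocks] at h2
  simp only [Matrix.transpose_fromRows, Matrix.fromCols_mul_fromBlocks,
    Matrix.mul_zero, Matrix.zero_mul, Matrix.mul_one, add_zero, zero_add,
    Matrix.fromCols_ext_iff] at h2
  have hC : C1 = B1ᵀ * S11 := h2.1
  intro s hX hZ'
  set X : Matrix (Fin k) (Fin k) ℂ := s • (1 : Matrix (Fin k) (Fin k) ℂ) - cm A11 with hXdef
  set Z : Matrix (Fin k) (Fin k) ℂ :=
    -(s • (1 : Matrix (Fin k) (Fin k) ℂ)) - (cm A11)ᵀ with hZdef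
  have hZ : IsUnit Z := by
    have : Z = -(s • (1 : Matrix (Fin k) (Fin k) ℂ) + (cm A11)ᵀ) := by
      rw [hZdef]; abel
    rw [this]; exact hZ'.neg
  have hXd : IsUnit X.det := (Matrix.isUnit_iff_isUnit_det X).mp hX
  have hZd : IsUnit Z.det := (Matrix.isUnit_iff_isUnit_det Z).mp hZ
  -- the complexified Lyapunov equation
  have h' : cm S11 * cm A11 + (cm A11)ᵀ * cm S11 = -((cm M1)ᵀ * cm M1) := by
    have := congrArg cm hL
    simpa [cm_mul, cm_transpose, cm_add, cm_neg] using this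
  have key : Z * cm S11 + cm S11 * X = (cm M1)ᵀ * cm M1 := by
    have e : Z * cm S11 + cm S11 * X = -(cm S11 * cm A11 + (cm A11)ᵀ * cm S11) := by
      rw [hZdef, hXdef]
      simp only [sub_mul, mul_sub, neg_mul, smul_mul_assoc, mul_smul_comm, one_mul, mul_one]
      abel
    rw [e, h', neg_neg]
  -- middle-factor identity
  have mid : cm S11 * X⁻¹ + Z⁻¹ * cm S11 = Z⁻¹ * ((cm M1)ᵀ * cm M1) * X⁻¹ := by
    rw [← key]
    rw [Matrix.mul_add, Matrix.add_mul]
    rw [← Matrix.mul_assoc Z⁻¹ Z (cm S11), Matrix.nonsing_inv_mul Z hZd, Matrix.one_mul]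
    rw [← Matrix.mul_assoc Z⁻¹ (cm S11) X, Matrix.mul_assoc (Z⁻¹ * cm S11) X X⁻¹,
      Matrix.mul_nonsing_inv X hXd, Matrix.mul_one]
  -- rewrite C1 via S11 and B1
  have hCc : cm C1 = (cm B1)ᵀ * cm S11 := by
    rw [hC, cm_mul, cm_transpose]
  have hCt : (cm C1)ᵀ = cm S11 * cm B1 := by
    rw [hCc, Matrix.transpose_mul, Matrix.transpose_transpose, ← cm_transpose, hS11]
  rw [hCt, hCc]
  calc (cm B1)ᵀ * cm S11 * X⁻¹ * cm B1 + (cm B1)ᵀ * Z⁻¹ * (cm S11 * cm B1)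
      = (cm B1)ᵀ * (cm S11 * X⁻¹ + Z⁻¹ * cm S11) * cm B1 := by
        simp only [Matrix.mul_add, Matrix.add_mul, Matrix.mul_assoc]
    _ = (cm B1)ᵀ * (Z⁻¹ * ((cm M1)ᵀ * cm M1) * X⁻¹) * cm B1 := by rw [mid]
    _ = (cm B1)ᵀ * Z⁻¹ * (cm M1)ᵀ * (cm M1 * X⁻¹ * cm B1) := by
        simp only [Matrix.mul_assoc]
end
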